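/- Let k be an algebraically closed field and let G and H be finite groups. If X is an indecomposable finite dimensional kG-module and Y is an indecomposable finite dimensional kH-module, then the outer tensor product X ⊗_k Y is an indecomposable k[G × H]-module. -/

import Mathlib

open TensorProduct
open Module LinearMap

/-- A representation is indecomposable if its space is nonzero and it is not
the direct sum of two nonzero subrepresentations. -/
def Representation.IsIndecomposable (k G V : Type) [Field k] [Group G]
    [AddCommGroup V] [Module k V] (ρ : Representation k G V) : Prop :=
  (∃ v : V, v ≠ 0) ∧
    ∀ p q : Submodule k V,
      (∀ (g : G) (v : V), v ∈ p → ρ g v ∈ p) →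
      (∀ (g : G) (v : V), v ∈ q → ρ g v ∈ q) →
      IsCompl p q → p = ⊥ ∨ q = ⊥

section LocalAlg

variable {k G V : Type} [Field k] [IsAlgClosed k] [Group G]
  [AddCommGroup V] [Module k V] [FiniteDimensional k V]

variable (ρ : Representation k G V)

/-- The centralizer algebra of a representation. -/
def RCent : Subalgebra k (Module.End k V) :=
  Subalgebra.centralizer k (Set.range fun g => (ρ g : Module.End k V))

omit [IsAlgClosed k] [FiniteDimensional k V] in
lemma mem_RCent_iff {f : Module.End k V} :
    f ∈ RCent ρ ↔ ∀ g : G, (ρ g : Module.End k V) * f = f * ρ g := by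
  rw [RCent, Subalgebra.mem_centralizer_iff]
  constructor
  · intro h g; exact h _ ⟨g, rfl⟩
  · rintro h x ⟨g, rfl⟩; exact h g

variable {ρ}

omit [IsAlgClosed k] [FiniteDimensional k V] in
lemma RCent.pow_comm {f : Module.End k V} (hf : f ∈ RCent ρ) (g : G) (m : ℕ) :
    (ρ g : Module.End k V) * f ^ m = f ^ m * ρ g := by
  induction m with
  | zero => simp
  | succ m ih =>
    rw [pow_succ, ← mul_assoc, ih, mul_assoc, (mem_RCent_iff ρ).mp hf g, ← mul_assoc]

lemma RCent.nilpotent_or_bijective (hρ : ρ.IsIndecomposable k G V)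
    {f : Module.End k V} (hf : f ∈ RCent ρ) :
    IsNilpotent f ∨ Function.Bijective f := by
  have : Nontrivial V := by
    obtain ⟨v, hv⟩ := hρ.1
    exact ⟨v, 0, hv⟩
  set n := finrank k V with hn
  have hnpos : 0 < n := hn ▸ finrank_pos
  -- kernel and range of f^n are invariant
  have hker : ∀ (g : G) (v : V), v ∈ LinearMap.ker (f ^ n) → ρ g v ∈ LinearMap.ker (f ^ n) := by
    intro g v hv
    rw [LinearMap.mem_ker] at hv ⊢
    have := congrArg (fun (h : Module.End k V) => h v) (RCent.pow_comm hf g n)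
    simp only [Module.End.mul_apply] at this
    rw [← this, hv, map_zero]
  have hrange : ∀ (g : G) (v : V), v ∈ LinearMap.range (f ^ n) →
      ρ g v ∈ LinearMap.range (f ^ n) := by
    rintro g v ⟨w, rfl⟩
    refine ⟨ρ g w, ?_⟩
    have := congrArg (fun (h : Module.End k V) => h w) (RCent.pow_comm hf g n)
    simpa only [Module.End.mul_apply] using this.symm
  -- Fitting : IsCompl (ker f^n) (range f^n)
  have hdisj : Disjoint (LinearMap.ker (f ^ n)) (LinearMap.range (f ^ n)) := by
    rw [Submodule.disjoint_def]
    rintro x hx ⟨y, rfl⟩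
    rw [LinearMap.mem_ker] at hx
    have hx2 : y ∈ LinearMap.ker (f ^ (n + n)) := by
      rw [pow_add]; simpa [Module.End.mul_apply] using hx
    rw [Module.End.ker_pow_eq_ker_pow_finrank_of_le (by omega), ← hn] at hx2
    exact hx2
  have hcompl : IsCompl (LinearMap.ker (f ^ n)) (LinearMap.range (f ^ n)) := by
    refine ⟨hdisj, codisjoint_iff.mpr ?_⟩
    apply Submodule.eq_top_of_finrank_eq
    have h1 := Submodule.finrank_sup_add_finrank_inf_eq
      (LinearMap.ker (f ^ n)) (LinearMap.range (f ^ n))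
    rw [disjoint_iff.mp hdisj, finrank_bot, add_zero] at h1
    have h2 := LinearMap.finrank_range_add_finrank_ker (f ^ n)
    omega
  rcases hρ.2 _ _ hker hrange hcompl with h | h
  · -- ker f^n = ⊥ : f injective hence bijective
    right
    have hinj : Function.Injective f := by
      rw [← LinearMap.ker_eq_bot]
      refine le_antisymm (le_trans ?_ h.le) bot_le
      intro x hx
      rw [LinearMap.mem_ker] at hx ⊢
      obtain ⟨m, hm⟩ := Nat.exists_eq_succ_of_ne_zero hnpos.ne'
      rw [hm, pow_succ, Module.End.mul_apply, hx, map_zero]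
    exact ⟨hinj, LinearMap.injective_iff_surjective.mp hinj⟩
  · -- range f^n = ⊥ : f^n = 0
    left
    refine ⟨n, ?_⟩
    ext v
    have : (f ^ n) v ∈ LinearMap.range (f ^ n) := ⟨v, rfl⟩
    rw [h] at this
    simpa using this

end LocalAlg

section LocalAlg2

set_option linter.unusedSectionVars false

variable {k G V : Type} [Field k] [IsAlgClosed k] [Group G]
  [AddCommGroup V] [Module k V] [FiniteDimensional k V]
  {ρ : Representation k G V} (hρ : ρ.IsIndecomposable k G V)

include hρ

lemma not_nilpotent_bijective {f : Module.End k V} (h1 : IsNilpotent f)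
    (h2 : Function.Bijective f) : False := by
  obtain ⟨v, hv⟩ := hρ.1
  obtain ⟨m, hm⟩ := h1
  have hinj : ∀ m : ℕ, Function.Injective ⇑(f ^ m) := by
    intro m
    induction m with
    | zero => rw [pow_zero, Module.End.one_eq_id]; exact fun a b h => h
    | succ i ih =>
      rw [pow_succ, Module.End.mul_eq_comp, LinearMap.coe_comp]
      exact ih.comp h2.injective
  apply hv
  apply hinj m
  rw [hm]
  simp

lemma RCent.mul_nilpotent {f x : Module.End k V} (hf : f ∈ RCent ρ) (hx : x ∈ RCent ρ)
    (hnx : IsNilpotent x) : IsNilpotent (f * x) := by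
  rcases RCent.nilpotent_or_bijective hρ (mul_mem hf hx) with h | h
  · exact h
  exfalso
  have hxinj : Function.Injective ⇑x := by
    have : Function.Injective (⇑f ∘ ⇑x) := by
      rw [← LinearMap.coe_comp, ← Module.End.mul_eq_comp]; exact h.injective
    exact Function.Injective.of_comp this
  exact not_nilpotent_bijective hρ hnx
    ⟨hxinj, LinearMap.injective_iff_surjective.mp hxinj⟩

lemma RCent.nilpotent_mul {f x : Module.End k V} (hf : f ∈ RCent ρ) (hx : x ∈ RCent ρ)
    (hnx : IsNilpotent x) : IsNilpotent (x * f) := by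
  rcases RCent.nilpotent_or_bijective hρ (mul_mem hx hf) with h | h
  · exact h
  exfalso
  have hxsurj : Function.Surjective ⇑x := by
    have : Function.Surjective (⇑x ∘ ⇑f) := by
      rw [← LinearMap.coe_comp, ← Module.End.mul_eq_comp]; exact h.surjective
    exact Function.Surjective.of_comp this
  exact not_nilpotent_bijective hρ hnx
    ⟨LinearMap.injective_iff_surjective.mpr hxsurj, hxsurj⟩

lemma RCent.nilpotent_add {x y : Module.End k V} (hx : x ∈ RCent ρ) (hy : y ∈ RCent ρ)
    (hnx : IsNilpotent x) (hny : IsNilpotent y) : IsNilpotent (x + y) := by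
  rcases RCent.nilpotent_or_bijective hρ (add_mem hx hy) with h | h
  · exact h
  exfalso
  obtain ⟨u, hu⟩ := (Module.End.isUnit_iff (x + y)).mpr h
  have huinv : ((u⁻¹ : (Module.End k V)ˣ) : Module.End k V) ∈ RCent ρ := by
    rw [mem_RCent_iff]
    intro g
    have hg : (ρ g : Module.End k V) * ↑u = ↑u * ρ g := by
      rw [hu]; exact (mem_RCent_iff ρ).mp (add_mem hx hy) g
    have l1 : (u : Module.End k V) * (ρ g * ↑u⁻¹) = ρ g := by
      rw [← mul_assoc, ← hg, mul_assoc, Units.mul_inv, mul_one]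
    have l2 : (u : Module.End k V) * (↑u⁻¹ * ρ g) = ρ g := by
      rw [← mul_assoc, Units.mul_inv, one_mul]
    calc (ρ g : Module.End k V) * ↑u⁻¹
        = ↑u⁻¹ * (↑u * (ρ g * ↑u⁻¹)) := by rw [← mul_assoc, Units.inv_mul, one_mul]
      _ = ↑u⁻¹ * (↑u * (↑u⁻¹ * ρ g)) := by rw [l1, l2]
      _ = ↑u⁻¹ * ρ g := by rw [← mul_assoc, Units.inv_mul, one_mul]
  have hone : (↑u⁻¹ * x : Module.End k V) + ↑u⁻¹ * y = 1 := by
    rw [← mul_add, ← hu, Units.inv_mul]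
  have ha : IsNilpotent ((u⁻¹ : (Module.End k V)ˣ) * x : Module.End k V) :=
    RCent.mul_nilpotent hρ huinv hx hnx
  have hb : IsNilpotent ((u⁻¹ : (Module.End k V)ˣ) * y : Module.End k V) :=
    RCent.mul_nilpotent hρ huinv hy hny
  have : IsUnit ((u⁻¹ : (Module.End k V)ˣ) * x : Module.End k V) := by
    have := hb.isUnit_one_sub
    rwa [← hone, add_sub_cancel_right] at this
  exact not_nilpotent_bijective hρ ha ((Module.End.isUnit_iff _).mp this)

end LocalAlg2

section Lam

set_option linter.unusedSectionVars false

variable {k G V : Type} [Field k] [IsAlgClosed k] [Group G]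
  [AddCommGroup V] [Module k V] [FiniteDimensional k V]

open Classical in
/-- The unique "eigenvalue" of an endomorphism (assuming one exists making it
nilpotent after subtraction). -/
noncomputable def lamEnd (f : Module.End k V) : k :=
  if h : ∃ c : k, IsNilpotent (f - c • (1 : Module.End k V)) then h.choose else 0

variable {ρ : Representation k G V} (hρ : ρ.IsIndecomposable k G V)

include hρ

lemma lamEnd_unique {f : Module.End k V} {c : k}
    (hc : IsNilpotent (f - c • (1 : Module.End k V))) : lamEnd f = c := by
  have hex : ∃ c : k, IsNilpotent (f - c • (1 : Module.End k V)) := ⟨c, hc⟩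
  rw [lamEnd]
  rw [dif_pos hex]
  set d := hex.choose with hd
  have hdn : IsNilpotent (f - d • (1 : Module.End k V)) := hex.choose_spec
  -- the two commute
  have hA : Commute ((d : k) • (1 : Module.End k V)) f := (Commute.one_left f).smul_left d
  have hB : Commute ((d : k) • (1 : Module.End k V)) (c • (1 : Module.End k V)) :=
    ((Commute.refl (1 : Module.End k V)).smul_left d).smul_right c
  have hC : Commute f (f - c • (1 : Module.End k V)) :=
    (Commute.refl f).sub_right ((Commute.one_right f).smul_right c)
  have hcomm : Commute (f - d • (1 : Module.End k V)) (f - c • (1 : Module.End k V)) :=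
    hC.sub_left (hA.sub_right hB)
  have hsub : IsNilpotent (((c - d) • (1 : Module.End k V))) := by
    have := Commute.isNilpotent_sub hcomm hdn hc
    have heq : (f - d • (1 : Module.End k V)) - (f - c • (1 : Module.End k V))
        = (c - d) • (1 : Module.End k V) := by
      rw [sub_smul]; abel
    rwa [heq] at this
  obtain ⟨m, hm⟩ := hsub
  obtain ⟨v, hv⟩ := hρ.1
  rw [smul_pow, one_pow] at hm
  by_contra hne
  have : (c - d) ^ m = 0 := by
    have := congrArg (fun (h : Module.End k V) => h v) hm
    simp only [LinearMap.smul_apply, Module.End.one_apply, LinearMap.zero_apply] at this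
    by_contra h0
    exact hv (by simpa [h0, smul_eq_zero] using this)
  have hcd : c - d = 0 := (pow_eq_zero_iff'.mp this).1
  rw [sub_eq_zero] at hcd
  exact hne hcd.symm

end Lam

section Lam2

set_option linter.unusedSectionVars false

variable {k G V : Type} [Field k] [IsAlgClosed k] [Group G]
  [AddCommGroup V] [Module k V] [FiniteDimensional k V]
  {ρ : Representation k G V} (hρ : ρ.IsIndecomposable k G V)

include hρ

lemma smul_one_mem_RCent (c : k) : c • (1 : Module.End k V) ∈ RCent ρ :=
  SMulMemClass.smul_mem c (one_mem _)

lemma lamEnd_spec {f : Module.End k V} (hf : f ∈ RCent ρ) :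
    IsNilpotent (f - lamEnd f • (1 : Module.End k V)) := by
  have : Nontrivial V := by obtain ⟨v, hv⟩ := hρ.1; exact ⟨v, 0, hv⟩
  obtain ⟨c, hc⟩ := Module.End.exists_eigenvalue f
  obtain ⟨v, hv⟩ := hc.exists_hasEigenvector
  have hvne : v ≠ 0 := hv.2
  have hfv : f v = c • v := hv.apply_eq_smul
  have hmem : f - c • (1 : Module.End k V) ∈ RCent ρ :=
    sub_mem hf (smul_one_mem_RCent hρ c)
  have hnotinj : ¬ Function.Injective ⇑(f - c • (1 : Module.End k V)) := by
    intro hinj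
    apply hvne
    apply hinj
    simp [LinearMap.sub_apply, hfv]
  have hnil : IsNilpotent (f - c • (1 : Module.End k V)) := by
    rcases RCent.nilpotent_or_bijective hρ hmem with h | h
    · exact h
    · exact absurd h.injective hnotinj
  rwa [lamEnd_unique hρ hnil]

lemma lamEnd_of_smul_one (c : k) : lamEnd (c • (1 : Module.End k V)) = c :=
  lamEnd_unique hρ (by simp)

lemma lamEnd_one : lamEnd (1 : Module.End k V) = 1 := by
  simpa using lamEnd_of_smul_one hρ 1

lemma lamEnd_zero : lamEnd (0 : Module.End k V) = 0 := by
  simpa using lamEnd_of_smul_one hρ 0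

lemma lamEnd_add {f g : Module.End k V} (hf : f ∈ RCent ρ) (hg : g ∈ RCent ρ) :
    lamEnd (f + g) = lamEnd f + lamEnd g := by
  apply lamEnd_unique hρ
  have heq : (f + g) - (lamEnd f + lamEnd g) • (1 : Module.End k V)
      = (f - lamEnd f • 1) + (g - lamEnd g • 1) := by
    rw [add_smul]; abel
  rw [heq]
  exact RCent.nilpotent_add hρ (sub_mem hf (smul_one_mem_RCent hρ _))
    (sub_mem hg (smul_one_mem_RCent hρ _)) (lamEnd_spec hρ hf) (lamEnd_spec hρ hg)

lemma lamEnd_smul {f : Module.End k V} (c : k) :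
    lamEnd (c • f) = c * lamEnd f := by
  by_cases hex : ∃ d : k, IsNilpotent (f - d • (1 : Module.End k V))
  · obtain ⟨d, hd⟩ := hex
    have hld : lamEnd f = d := lamEnd_unique hρ hd
    apply lamEnd_unique hρ
    rw [hld]
    have heq : c • f - (c * d) • (1 : Module.End k V) = c • (f - d • 1) := by
      rw [smul_sub, smul_smul]
    rw [heq]
    exact hd.smul c
  · by_cases hc : c = 0
    · subst hc; simpa using lamEnd_zero hρ
    · -- c ≠ 0 : neither lamEnd is "defined"; both are junk 0
      have hex2 : ¬ ∃ d : k, IsNilpotent (c • f - d • (1 : Module.End k V)) := by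
        rintro ⟨d, hd⟩
        apply hex
        refine ⟨c⁻¹ * d, ?_⟩
        have heq : f - (c⁻¹ * d) • (1 : Module.End k V) = c⁻¹ • (c • f - d • 1) := by
          rw [smul_sub, smul_smul, smul_smul, inv_mul_cancel₀ hc, one_smul]
        rw [heq]
        exact hd.smul _
      rw [lamEnd, dif_neg hex2, lamEnd, dif_neg hex, mul_zero]

lemma lamEnd_mul {f g : Module.End k V} (hf : f ∈ RCent ρ) (hg : g ∈ RCent ρ) :
    lamEnd (f * g) = lamEnd f * lamEnd g := by
  apply lamEnd_unique hρ
  have heq : f * g - (lamEnd f * lamEnd g) • (1 : Module.End k V)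
      = f * (g - lamEnd g • 1) + lamEnd g • (f - lamEnd f • 1) := by
    rw [mul_sub, smul_sub]
    rw [mul_smul_comm, mul_one, smul_smul, mul_comm (lamEnd g) (lamEnd f)]
    abel
  rw [heq]
  refine RCent.nilpotent_add hρ ?_ ?_ ?_ ?_
  · exact mul_mem hf (sub_mem hg (smul_one_mem_RCent hρ _))
  · exact SMulMemClass.smul_mem _ (sub_mem hf (smul_one_mem_RCent hρ _))
  · exact RCent.mul_nilpotent hρ hf (sub_mem hg (smul_one_mem_RCent hρ _)) (lamEnd_spec hρ hg)
  · exact (lamEnd_spec hρ hf).smul _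

lemma lamEnd_sum {ι : Type} (s : Finset ι) (F : ι → Module.End k V)
    (hF : ∀ i ∈ s, F i ∈ RCent ρ) :
    lamEnd (∑ i ∈ s, F i) = ∑ i ∈ s, lamEnd (F i) := by
  classical
  induction s using Finset.cons_induction with
  | empty => simpa using lamEnd_zero hρ
  | cons a s ha ih =>
    rw [Finset.sum_cons, Finset.sum_cons]
    rw [lamEnd_add hρ (hF a (Finset.mem_cons_self a s))
      (sum_mem fun i hi => hF i (Finset.mem_cons_of_mem hi))]
    rw [ih (fun i hi => hF i (Finset.mem_cons_of_mem hi))]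

end Lam2

section Jnil

set_option linter.unusedSectionVars false

variable {k G V : Type} [Field k] [IsAlgClosed k] [Group G]
  [AddCommGroup V] [Module k V] [FiniteDimensional k V]
  {ρ : Representation k G V}

/-- The subspace of nilpotent equivariant endomorphisms. -/
def Jnil (hρ : ρ.IsIndecomposable k G V) : Submodule k (Module.End k V) where
  carrier := {f | f ∈ RCent ρ ∧ IsNilpotent f}
  add_mem' := fun ha hb =>
    ⟨add_mem ha.1 hb.1, RCent.nilpotent_add hρ ha.1 hb.1 ha.2 hb.2⟩
  zero_mem' := ⟨zero_mem _, ⟨1, by simp⟩⟩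
  smul_mem' := fun c f hf => ⟨SMulMemClass.smul_mem c hf.1, hf.2.smul c⟩

variable (hρ : ρ.IsIndecomposable k G V)

lemma mem_Jnil {f : Module.End k V} : f ∈ Jnil hρ ↔ f ∈ RCent ρ ∧ IsNilpotent f :=
  Iff.rfl

lemma Jnil_mul_le : Jnil hρ * Jnil hρ ≤ Jnil hρ := by
  rw [Submodule.mul_le]
  intro x hx y hy
  exact ⟨mul_mem hx.1 hy.1, RCent.mul_nilpotent hρ hx.1 hy.1 hy.2⟩

lemma Submodule_mul_le_mul {A : Type} [Ring A] [Algebra k A]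
    {I J K L : Submodule k A} (h1 : I ≤ J) (h2 : K ≤ L) : I * K ≤ J * L := by
  rw [Submodule.mul_le]
  intro x hx y hy
  exact Submodule.mul_mem_mul (h1 hx) (h2 hy)

lemma spow_succ (J : Submodule k (Module.End k V)) (n : ℕ) : J ^ (n + 1) = J ^ n * J :=
  pow_succ J n

lemma spow_one (J : Submodule k (Module.End k V)) : J ^ 1 = J := pow_one J

lemma spow_add (J : Submodule k (Module.End k V)) (a b : ℕ) : J ^ (a + b) = J ^ a * J ^ b :=
  pow_add J a b

lemma Jnil_pow_succ_le {n : ℕ} (hn : 1 ≤ n) : Jnil hρ ^ (n + 1) ≤ Jnil hρ ^ n := by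
  induction n, hn using Nat.le_induction with
  | base => rw [spow_succ, spow_one]; exact Jnil_mul_le hρ
  | succ m hm ih =>
    rw [spow_succ _ (m + 1), spow_succ _ m]
    exact Submodule_mul_le_mul ih le_rfl

lemma Jnil_pow_le_self {n : ℕ} (hn : 1 ≤ n) : Jnil hρ ^ n ≤ Jnil hρ := by
  induction n, hn using Nat.le_induction with
  | base => rw [spow_one]
  | succ m hm ih => exact le_trans (Jnil_pow_succ_le hρ hm) ih

lemma Jnil_pow_eq_bot : ∃ m : ℕ, 1 ≤ m ∧ Jnil hρ ^ m = ⊥ := by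
  classical
  -- first find m ≥ 1 with J^(m+1) = J^m
  obtain ⟨m, hm1, hm⟩ : ∃ m : ℕ, 1 ≤ m ∧ Jnil hρ ^ (m + 1) = Jnil hρ ^ m := by
    by_contra hcon
    push_neg at hcon
    have hstrict : ∀ n : ℕ, 1 ≤ n →
        finrank k (Jnil hρ ^ (n + 1) : Submodule k (Module.End k V)) <
        finrank k (Jnil hρ ^ n : Submodule k (Module.End k V)) := by
      intro n hn
      exact Submodule.finrank_lt_finrank_of_lt
        (lt_of_le_of_ne (Jnil_pow_succ_le hρ hn) (hcon n hn))
    have hdec : ∀ j : ℕ,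
        finrank k (Jnil hρ ^ (j + 1) : Submodule k (Module.End k V)) + j ≤
        finrank k (Jnil hρ ^ 1 : Submodule k (Module.End k V)) := by
      intro j
      induction j with
      | zero => simp
      | succ i ih =>
        have := hstrict (i + 1) (by omega)
        omega
    have := hdec (finrank k (Jnil hρ ^ 1 : Submodule k (Module.End k V)) + 1)
    omega
  set I := Jnil hρ ^ m with hI
  have hstep : ∀ j : ℕ, Jnil hρ ^ (m + j) = Jnil hρ ^ m := by
    intro j
    induction j with
    | zero => rfl
    | succ i ih =>
      have h2 : m + (i + 1) = (m + i) + 1 := by omega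
      rw [h2, spow_succ _ (m + i), ih, ← spow_succ _ m, hm]
  have hII : I * I = I := by
    rw [hI, ← spow_add]
    exact hstep m
  refine ⟨m, hm1, ?_⟩
  by_contra hbot
  rw [← hI] at hbot
  -- Nakayama-style argument
  set S := {n : ℕ | ∃ a : Module.End k V,
    I * Submodule.span k {a} ≠ ⊥ ∧ finrank k (I * Submodule.span k {a} :
      Submodule k (Module.End k V)) = n} with hS
  have hSne : S.Nonempty := by
    refine ⟨_, 1, ?_, rfl⟩
    rw [← Submodule.one_eq_span, Submodule.mul_one]
    exact hbot
  obtain ⟨a, ha1, ha2⟩ := Nat.sInf_mem hSne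
  have hmin : ∀ b : Module.End k V, I * Submodule.span k {b} ≠ ⊥ →
      sInf S ≤ finrank k (I * Submodule.span k {b} : Submodule k (Module.End k V)) :=
    fun b hb => Nat.sInf_le ⟨b, hb, rfl⟩
  set N := I * Submodule.span k {a} with hN
  have hIN : I * N = N := by rw [hN, ← mul_assoc, hII]
  obtain ⟨b, hbN, hb⟩ : ∃ b ∈ N, I * Submodule.span k {b} ≠ ⊥ := by
    by_contra hcon
    push_neg at hcon
    apply ha1
    rw [← hIN]
    refine le_antisymm ?_ bot_le
    rw [Submodule.mul_le]
    intro x hx y hy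
    have : x * y ∈ I * Submodule.span k {y} :=
      Submodule.mul_mem_mul hx (Submodule.mem_span_singleton_self y)
    rw [hcon y hy] at this
    exact this
  have hble : I * Submodule.span k {b} ≤ N := by
    rw [← hIN]
    exact Submodule_mul_le_mul le_rfl
      ((Submodule.span_singleton_le_iff_mem b N).mpr hbN)
  have heq : I * Submodule.span k {b} = N := by
    apply Submodule.eq_of_le_of_finrank_le hble
    rw [ha2]
    exact hmin b hb
  have hbmem : b ∈ I * Submodule.span k {b} := heq ▸ hbN
  obtain ⟨z, hzI, hzb⟩ := Submodule.mem_mul_span_singleton.mp hbmem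
  have hznil : IsNilpotent z := ((Jnil_pow_le_self hρ hm1) hzI).2
  have hbzero : b = 0 := by
    have hu : IsUnit (1 - z) := hznil.isUnit_one_sub
    obtain ⟨u, hu⟩ := hu
    have : (1 - z) * b = 0 := by rw [sub_mul, one_mul, hzb, sub_self]
    calc b = ↑u⁻¹ * ((1 - z) * b) := by rw [← hu, ← mul_assoc, Units.inv_mul, one_mul]
      _ = 0 := by rw [this, mul_zero]
  apply hb
  rw [hbzero, Submodule.span_zero_singleton, Submodule.mul_bot]

end Jnil

section Entries

set_option linter.unusedSectionVars false

variable {k V W : Type} [Field k]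
  [AddCommGroup V] [Module k V] [AddCommGroup W] [Module k W]
  {n : ℕ} (b : Basis (Fin n) k W)

/-- Coefficient map `V ⊗ W → V` with respect to a basis vector of `W`. -/
noncomputable def cMap (i : Fin n) : V ⊗[k] W →ₗ[k] V :=
  (TensorProduct.rid k V).toLinearMap ∘ₗ LinearMap.lTensor V (b.coord i)

lemma cMap_tmul (i : Fin n) (v : V) (w : W) :
    cMap b i (v ⊗ₜ[k] w) = b.repr w i • v := by
  simp [cMap, TensorProduct.smul_tmul, Basis.coord_apply]

lemma cMap_recon (t : V ⊗[k] W) : ∑ i, (cMap b i t) ⊗ₜ[k] b i = t := by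
  induction t with
  | zero => simp
  | tmul v w =>
    calc ∑ i, (cMap b i (v ⊗ₜ[k] w)) ⊗ₜ[k] b i
        = ∑ i, v ⊗ₜ[k] (b.repr w i • b i) := by
          apply Finset.sum_congr rfl
          intro i _
          rw [cMap_tmul, TensorProduct.smul_tmul]
      _ = v ⊗ₜ[k] (∑ i, b.repr w i • b i) := by rw [TensorProduct.tmul_sum]
      _ = v ⊗ₜ[k] w := by rw [Basis.sum_repr]
  | add x y hx hy =>
    simp only [map_add, TensorProduct.add_tmul]
    rw [Finset.sum_add_distrib, hx, hy]

/-- Matrix entries (valued in `End V`) of an endomorphism of `V ⊗ W`. -/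
noncomputable def entMap (f : Module.End k (V ⊗[k] W)) (i j : Fin n) : Module.End k V :=
  cMap b i ∘ₗ (f ∘ₗ ((TensorProduct.mk k V W).flip (b j)))

lemma entMap_apply (f : Module.End k (V ⊗[k] W)) (i j : Fin n) (v : V) :
    entMap b f i j v = cMap b i (f (v ⊗ₜ[k] b j)) := rfl

lemma apply_tmul_basis (f : Module.End k (V ⊗[k] W)) (j : Fin n) (v : V) :
    f (v ⊗ₜ[k] b j) = ∑ i, (entMap b f i j v) ⊗ₜ[k] b i :=
  (cMap_recon b _).symm

lemma entMap_mul (f f' : Module.End k (V ⊗[k] W)) (i j : Fin n) :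
    entMap b (f * f') i j = ∑ m, entMap b f i m * entMap b f' m j := by
  ext v
  rw [LinearMap.sum_apply]
  have h1 : (f * f') (v ⊗ₜ[k] b j) = f (f' (v ⊗ₜ[k] b j)) := rfl
  rw [entMap_apply, h1, apply_tmul_basis b f', map_sum, map_sum]
  apply Finset.sum_congr rfl
  intro m _
  rw [Module.End.mul_apply, entMap_apply, entMap_apply]

lemma entMap_sub (f f' : Module.End k (V ⊗[k] W)) (i j : Fin n) :
    entMap b (f - f') i j = entMap b f i j - entMap b f' i j := by
  ext v
  simp [entMap_apply, LinearMap.sub_apply]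

lemma entMap_one (i j : Fin n) :
    entMap b (1 : Module.End k (V ⊗[k] W)) i j = b.repr (b j) i • 1 := by
  ext v
  rw [entMap_apply, Module.End.one_apply, cMap_tmul]
  simp

lemma entMap_lTensor (u : Module.End k W) (i j : Fin n) :
    entMap b (LinearMap.lTensor V u) i j = b.repr (u (b j)) i • 1 := by
  ext v
  rw [entMap_apply, LinearMap.lTensor_tmul, cMap_tmul]
  simp

lemma eq_zero_of_entMap (f : Module.End k (V ⊗[k] W)) (h : ∀ i j, entMap b f i j = 0) :
    f = 0 := by
  apply LinearMap.ext
  intro t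
  rw [LinearMap.zero_apply]
  have ht : ∀ (v : V) (w : W), f (v ⊗ₜ[k] w) = 0 := by
    intro v w
    have hw : v ⊗ₜ[k] w = ∑ j, b.repr w j • (v ⊗ₜ[k] b j) := by
      calc v ⊗ₜ[k] w = v ⊗ₜ[k] (∑ j, b.repr w j • b j) := by rw [Basis.sum_repr]
        _ = ∑ j, v ⊗ₜ[k] (b.repr w j • b j) := by rw [TensorProduct.tmul_sum]
        _ = ∑ j, b.repr w j • (v ⊗ₜ[k] b j) := by
            apply Finset.sum_congr rfl
            intro j _
            rw [TensorProduct.tmul_smul]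
    rw [hw, map_sum]
    apply Finset.sum_eq_zero
    intro j _
    rw [map_smul, apply_tmul_basis b f]
    simp [h]
  induction t with
  | zero => simp
  | tmul v w => exact ht v w
  | add x y hx hy => rw [map_add, hx, hy, add_zero]

lemma cMap_rTensor (u : Module.End k V) (i : Fin n) (t : V ⊗[k] W) :
    cMap b i (TensorProduct.map u (1 : Module.End k W) t) = u (cMap b i t) := by
  induction t with
  | zero => simp
  | tmul v w => rw [TensorProduct.map_tmul, cMap_tmul, cMap_tmul]; simp
  | add x y hx hy => simp [map_add, hx, hy]

end Entries

section Bridge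

set_option linter.unusedSectionVars false

variable {k G V W : Type} [Field k] [IsAlgClosed k] [Group G]
  [AddCommGroup V] [Module k V] [FiniteDimensional k V]
  [AddCommGroup W] [Module k W]
  {ρ : Representation k G V} (hρ : ρ.IsIndecomposable k G V)
  {n : ℕ} (b : Basis (Fin n) k W)

lemma entMap_mem_RCent {f : Module.End k (V ⊗[k] W)}
    (hcomm : ∀ g : G, TensorProduct.map (ρ g) (1 : Module.End k W) * f
      = f * TensorProduct.map (ρ g) (1 : Module.End k W)) (i j : Fin n) :
    entMap b f i j ∈ RCent ρ := by
  rw [mem_RCent_iff]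
  intro g
  ext v
  rw [Module.End.mul_apply, Module.End.mul_apply, entMap_apply, entMap_apply]
  have h1 : (ρ g v) ⊗ₜ[k] b j
      = TensorProduct.map (ρ g) (1 : Module.End k W) (v ⊗ₜ[k] b j) := by
    rw [TensorProduct.map_tmul]; rfl
  have h2 : f (TensorProduct.map (ρ g) (1 : Module.End k W) (v ⊗ₜ[k] b j))
      = TensorProduct.map (ρ g) (1 : Module.End k W) (f (v ⊗ₜ[k] b j)) := by
    have := congrArg (fun (h : Module.End k (V ⊗[k] W)) => h (v ⊗ₜ[k] b j)) (hcomm g)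
    simpa only [Module.End.mul_apply] using this.symm
  rw [h1, h2, cMap_rTensor]

lemma entMap_pow_mem {f : Module.End k (V ⊗[k] W)}
    (hent : ∀ i j, entMap b f i j ∈ Jnil hρ) (s : ℕ) (i j : Fin n) :
    entMap b (f ^ (s + 1)) i j ∈ (Jnil hρ) ^ (s + 1) := by
  induction s generalizing i j with
  | zero =>
    simp only [zero_add, pow_one]
    exact hent i j
  | succ t ih =>
    rw [pow_succ f (t + 1), entMap_mul, spow_succ]
    exact sum_mem fun m _ => Submodule.mul_mem_mul (ih i m) (hent m j)

lemma idem_eq_zero_of_ent_nil {f : Module.End k (V ⊗[k] W)}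
    (hmul : f * f = f) (hent : ∀ i j, entMap b f i j ∈ Jnil hρ) : f = 0 := by
  obtain ⟨m, hm1, hmbot⟩ := Jnil_pow_eq_bot hρ
  obtain ⟨s, rfl⟩ : ∃ s, m = s + 1 := ⟨m - 1, by omega⟩
  have hfm : f ^ (s + 1) = f := by
    clear hmbot
    induction s with
    | zero => rw [pow_one]
    | succ t ih => rw [pow_succ, ih (by omega), hmul]
  rw [← hfm]
  apply eq_zero_of_entMap b
  intro i j
  have := entMap_pow_mem hρ b hent s i j
  rw [hmbot] at this
  simpa using this

end Bridge

set_option maxHeartbeats 1000000 in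
/-- Over an algebraically closed field `k`, the outer tensor product
`X ⊗_k Y` of an indecomposable finite dimensional `kG`-module `X` and an
indecomposable finite dimensional `kH`-module `Y` (where `(g,h)` acts as the
tensor product of the actions of `g` and `h`) is an indecomposable
`k[G × H]`-module. -/
theorem outer_tensor_indecomposable
    (k : Type) [Field k] [IsAlgClosed k] (G H : Type) [Group G] [Group H]
    [Finite G] [Finite H]
    (V : Type) [AddCommGroup V] [Module k V] [FiniteDimensional k V]
    (W : Type) [AddCommGroup W] [Module k W] [FiniteDimensional k W]
    (ρ : Representation k G V) (τ : Representation k H W)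
    (hρ : ρ.IsIndecomposable k G V) (hτ : τ.IsIndecomposable k H W) :
    Representation.IsIndecomposable k (G × H) (V ⊗[k] W)
      (Representation.tprod (ρ.comp (MonoidHom.fst G H)) (τ.comp (MonoidHom.snd G H))) := by
  classical
  set π := Representation.tprod (ρ.comp (MonoidHom.fst G H)) (τ.comp (MonoidHom.snd G H))
    with hπ
  constructor
  · -- nonzero vector
    obtain ⟨v, hv⟩ := hρ.1
    obtain ⟨w, hw⟩ := hτ.1
    refine ⟨v ⊗ₜ[k] w, ?_⟩
    intro hvw
    obtain ⟨φ, hφ⟩ : ∃ φ : V →ₗ[k] k, φ v ≠ 0 := by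
      by_contra hcon
      push_neg at hcon
      exact hv ((Module.forall_dual_apply_eq_zero_iff k v).mp hcon)
    obtain ⟨ψ, hψ⟩ : ∃ ψ : W →ₗ[k] k, ψ w ≠ 0 := by
      by_contra hcon
      push_neg at hcon
      exact hw ((Module.forall_dual_apply_eq_zero_iff k w).mp hcon)
    have := congrArg (TensorProduct.lift (φ.smulRight ψ)) hvw
    rw [TensorProduct.lift.tmul, map_zero] at this
    simp only [LinearMap.smulRight_apply, LinearMap.smul_apply, smul_eq_mul] at this
    exact hφ (by
      rcases mul_eq_zero.mp this with h | h
      · exact h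
      · exact absurd h hψ)
  · intro p q hp hq hcompl
    -- the projection onto p along q
    set e : Module.End k (V ⊗[k] W) :=
      p.subtype ∘ₗ (Submodule.projectionOnto p q hcompl) with he
    have hep : ∀ x, e x ∈ p := fun x => (Submodule.projectionOnto p q hcompl x).2
    have he1 : ∀ x ∈ p, e x = x := by
      intro x hx
      have := Submodule.linearProjOfIsCompl_apply_left hcompl ⟨x, hx⟩
      rw [he]
      simp only [LinearMap.comp_apply, Submodule.subtype_apply]
      rw [this]
    have he0 : ∀ x ∈ q, e x = 0 := by
      intro x hx
      rw [he]
      simp only [LinearMap.comp_apply, Submodule.subtype_apply]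
      rw [Submodule.projectionOnto_apply_of_mem_right hcompl hx, Submodule.coe_zero]
    have hee : e * e = e := by
      apply LinearMap.ext
      intro x
      rw [Module.End.mul_apply]
      exact he1 _ (hep x)
    -- e commutes with the G × H action
    have hcommπ : ∀ σ : G × H, (π σ : Module.End k (V ⊗[k] W)) * e = e * π σ := by
      intro σ
      apply LinearMap.ext
      intro x
      rw [Module.End.mul_apply, Module.End.mul_apply]
      obtain ⟨y, hy, z, hz, hyz⟩ := Submodule.mem_sup.mp
        (by rw [hcompl.sup_eq_top]; trivial : x ∈ p ⊔ q)
      have hex : e x = y := by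
        rw [← hyz, map_add, he1 y hy, he0 z hz, add_zero]
      rw [hex, ← hyz, map_add, map_add, he1 _ (hp σ y hy), he0 _ (hq σ z hz), add_zero]
    have hcommG : ∀ g : G, TensorProduct.map (ρ g) (1 : Module.End k W) * e
        = e * TensorProduct.map (ρ g) (1 : Module.End k W) := by
      intro g
      have h1 : (π (g, 1) : Module.End k (V ⊗[k] W))
          = TensorProduct.map (ρ g) (1 : Module.End k W) := by
        rw [hπ, Representation.tprod_apply]
        congr 1
        exact map_one τ
      rw [← h1]
      exact hcommπ (g, 1)
    have hcommH : ∀ h : H, LinearMap.lTensor V (τ h) * e = e * LinearMap.lTensor V (τ h) := by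
      intro h
      have h1 : (π (1, h) : Module.End k (V ⊗[k] W)) = LinearMap.lTensor V (τ h) := by
        rw [hπ, Representation.tprod_apply]
        have : (ρ.comp (MonoidHom.fst G H)) (1, h) = (1 : Module.End k V) := by
          simp
        rw [show ((ρ.comp (MonoidHom.fst G H)) (1, h) : Module.End k V) = 1 from by simp]
        rfl
      rw [← h1]
      exact hcommπ (1, h)
    -- entries and scalar matrix
    set n := finrank k W with hn
    set b : Basis (Fin n) k W := Module.finBasis k W with hb
    set A : Fin n → Fin n → Module.End k V := fun i j => entMap b e i j with hA
    have hAR : ∀ i j, A i j ∈ RCent ρ := fun i j => entMap_mem_RCent b hcommG i j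
    set Mm : Matrix (Fin n) (Fin n) k := Matrix.of (fun i j => lamEnd (A i j)) with hMm
    set ε : Module.End k W := Matrix.toLinAlgEquiv b Mm with hε
    -- idempotency of the matrix
    have hAmul : ∀ i j, A i j = ∑ m, A i m * A m j := by
      intro i j
      rw [hA]
      simp only
      rw [← entMap_mul b e e i j, hee]
    have hMM : Mm * Mm = Mm := by
      ext i j
      rw [Matrix.mul_apply]
      have h2 : lamEnd (A i j) = lamEnd (∑ m, A i m * A m j) := by rw [← hAmul i j]
      rw [hMm]
      simp only [Matrix.of_apply]
      rw [h2, lamEnd_sum hρ _ _ (fun m _ => mul_mem (hAR i m) (hAR m j))]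
      apply Finset.sum_congr rfl
      intro m _
      rw [lamEnd_mul hρ (hAR i m) (hAR m j)]
    have hεε : ε * ε = ε := by
      rw [hε, ← map_mul, hMM]
    -- ε commutes with τ
    have hετ : ∀ h : H, ε * τ h = τ h * ε := by
      intro h
      set Th : Matrix (Fin n) (Fin n) k := LinearMap.toMatrixAlgEquiv b (τ h) with hTh
      have hτh : (τ h : Module.End k W) = Matrix.toLinAlgEquiv b Th := by
        rw [hTh, Matrix.toLinAlgEquiv_toMatrixAlgEquiv]
      have hentd : ∀ i j, entMap b (LinearMap.lTensor V (τ h) * e) i j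
          = entMap b (e * LinearMap.lTensor V (τ h)) i j := by
        intro i j; rw [hcommH h]
      have hmat : Th * Mm = Mm * Th := by
        ext i j
        have hL : lamEnd (entMap b (LinearMap.lTensor V (τ h) * e) i j)
            = ∑ m, Th i m * Mm m j := by
          rw [entMap_mul]
          have hterm : ∀ m, entMap b (LinearMap.lTensor V (τ h)) i m * entMap b e m j
              = Th i m • A m j := by
            intro m
            rw [entMap_lTensor, smul_mul_assoc, one_mul, hTh,
              LinearMap.toMatrixAlgEquiv_apply]
          rw [Finset.sum_congr rfl (fun m _ => hterm m)]
          rw [lamEnd_sum hρ _ _ (fun m _ => SMulMemClass.smul_mem _ (hAR m j))]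
          apply Finset.sum_congr rfl
          intro m _
          rw [lamEnd_smul hρ]
          rfl
        have hR : lamEnd (entMap b (e * LinearMap.lTensor V (τ h)) i j)
            = ∑ m, Mm i m * Th m j := by
          rw [entMap_mul]
          have hterm : ∀ m, entMap b e i m * entMap b (LinearMap.lTensor V (τ h)) m j
              = Th m j • A i m := by
            intro m
            rw [entMap_lTensor, mul_smul_comm, mul_one, hTh,
              LinearMap.toMatrixAlgEquiv_apply]
          rw [Finset.sum_congr rfl (fun m _ => hterm m)]
          rw [lamEnd_sum hρ _ _ (fun m _ => SMulMemClass.smul_mem _ (hAR i m))]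
          rw [Finset.sum_congr rfl (fun m _ => by rw [lamEnd_smul hρ])]
          apply Finset.sum_congr rfl
          intro m _
          rw [mul_comm]
          rfl
        rw [Matrix.mul_apply, Matrix.mul_apply, ← hL, ← hR, hentd]
      rw [hε, hτh, ← map_mul, ← map_mul, hmat]
    -- range and kernel of ε are invariant complements
    have hinv1 : ∀ (h : H) (w : W), w ∈ LinearMap.range ε → τ h w ∈ LinearMap.range ε := by
      rintro h w ⟨u, rfl⟩
      refine ⟨τ h u, ?_⟩
      have := congrArg (fun (f : Module.End k W) => f u) (hετ h)
      simpa only [Module.End.mul_apply] using this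
    have hinv2 : ∀ (h : H) (w : W), w ∈ LinearMap.ker ε → τ h w ∈ LinearMap.ker ε := by
      intro h w hw
      rw [LinearMap.mem_ker] at hw ⊢
      have := congrArg (fun (f : Module.End k W) => f w) (hετ h)
      simp only [Module.End.mul_apply] at this
      rw [this, hw, map_zero]
    have hcompl2 : IsCompl (LinearMap.range ε) (LinearMap.ker ε) := by
      constructor
      · rw [disjoint_iff, Submodule.eq_bot_iff]
        intro x hx
        rw [Submodule.mem_inf] at hx
        obtain ⟨⟨u, rfl⟩, hker⟩ := hx
        show ε u = 0
        have h1 : ε (ε u) = 0 := LinearMap.mem_ker.mp hker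
        have h2 := congrArg (fun (f : Module.End k W) => f u) hεε
        simp only [Module.End.mul_apply] at h2
        rw [← h2, h1]
      · rw [codisjoint_iff, eq_top_iff]
        intro x _
        rw [Submodule.mem_sup]
        refine ⟨ε x, ⟨x, rfl⟩, x - ε x, ?_, by abel⟩
        rw [LinearMap.mem_ker, map_sub]
        have := congrArg (fun (f : Module.End k W) => f x) hεε
        simp only [Module.End.mul_apply] at this
        rw [this, sub_self]
    -- helper: entries with zero lambda give zero idempotent
    have hkey : ∀ f : Module.End k (V ⊗[k] W), f * f = f →
        (∀ i j, entMap b f i j ∈ RCent ρ) →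
        (∀ i j, lamEnd (entMap b f i j) = 0) → f = 0 := by
      intro f hmul hfR hf0
      apply idem_eq_zero_of_ent_nil hρ b hmul
      intro i j
      refine ⟨hfR i j, ?_⟩
      have := lamEnd_spec hρ (hfR i j)
      rwa [hf0 i j, zero_smul, sub_zero] at this
    rcases hτ.2 (LinearMap.range ε) (LinearMap.ker ε) hinv1 hinv2 hcompl2 with hcase | hcase
    · -- ε = 0 : p = ⊥
      left
      have hε0 : ε = 0 := LinearMap.range_eq_bot.mp hcase
      have hM0 : Mm = 0 := by
        have := congrArg (LinearMap.toMatrixAlgEquiv b) hε0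
        rwa [hε, LinearMap.toMatrixAlgEquiv_toLinAlgEquiv, map_zero] at this
      have he00 : e = 0 := by
        apply hkey e hee (fun i j => hAR i j)
        intro i j
        have : Mm i j = 0 := by rw [hM0]; rfl
        rw [hMm] at this
        exact this
      rw [Submodule.eq_bot_iff]
      intro x hx
      rw [← he1 x hx, he00]
      rfl
    · -- ε = 1 : q = ⊥
      right
      have hε1 : ε = 1 := by
        ext x
        have hx : ε x - x ∈ LinearMap.ker ε := by
          rw [LinearMap.mem_ker, map_sub]
          have := congrArg (fun (f : Module.End k W) => f x) hεε
          simp only [Module.End.mul_apply] at this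
          rw [this, sub_self]
        rw [hcase, Submodule.mem_bot, sub_eq_zero] at hx
        rw [Module.End.one_apply, hx]
      have hM1 : Mm = 1 := by
        have := congrArg (LinearMap.toMatrixAlgEquiv b) hε1
        rwa [hε, LinearMap.toMatrixAlgEquiv_toLinAlgEquiv, map_one] at this
      have hone : e = 1 := by
        have h10 : (1 : Module.End k (V ⊗[k] W)) - e = 0 := by
          apply hkey
          · rw [sub_mul, one_mul, mul_sub, mul_one, hee, sub_self, sub_zero]
          · intro i j
            rw [entMap_sub, entMap_one]
            exact sub_mem (smul_one_mem_RCent hρ _) (hAR i j)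
          · intro i j
            rw [entMap_sub, entMap_one]
            have hsub : b.repr (b j) i • (1 : Module.End k V) - entMap b e i j
                = b.repr (b j) i • (1 : Module.End k V) + (-1 : k) • entMap b e i j := by
              rw [neg_one_smul]
              abel
            rw [hsub, lamEnd_add hρ (smul_one_mem_RCent hρ _)
              (SMulMemClass.smul_mem _ (hAR i j)), lamEnd_of_smul_one hρ, lamEnd_smul hρ]
            have hMij : lamEnd (entMap b e i j) = Mm i j := rfl
            rw [hMij, hM1, Matrix.one_apply, Basis.repr_self, Finsupp.single_apply]
            by_cases hij : i = j
            · subst hij; simp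
            · rw [if_neg hij, if_neg (fun hji => hij hji.symm)]
              simp
        rw [sub_eq_zero] at h10
        exact h10.symm
      rw [Submodule.eq_bot_iff]
      intro x hx
      rw [← he0 x hx, hone]
      rfl
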